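/- Let k ≥ 1 and let m ≥ 1 be odd, and set n = m·2^k − 1. Then for every natural number d with 0 ≤ d < 2^k and every N, the polynomial I_{n,d} is equal to 0 in MvPolynomial (Fin N) (ZMod 2). -/

import Mathlib

open MvPolynomial

/-- The polynomial `I_{n,d}` in `N` variables over `ZMod 2`:
`ε(n-d+1)·h_d + ∑_{j=1}^{d} ε(C(n,j))·h_{d-j}·p_j`. -/
noncomputable def Ipoly (N n d : ℕ) : MvPolynomial (Fin N) (ZMod 2) :=
  C (((n : ℤ) - (d : ℤ) + 1 : ℤ) : ZMod 2) * hsymm (Fin N) (ZMod 2) d +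
    ∑ j ∈ Finset.Icc 1 d,
      C (((n.choose j : ℤ)) : ZMod 2) * hsymm (Fin N) (ZMod 2) (d - j) *
        psum (Fin N) (ZMod 2) j

/-! ### Power series setup -/

/-- The geometric series `∑ (X i)^n t^n`. -/
noncomputable def Gser (N : ℕ) (i : Fin N) : PowerSeries (MvPolynomial (Fin N) (ZMod 2)) :=
  PowerSeries.mk fun n => (MvPolynomial.X i : MvPolynomial (Fin N) (ZMod 2)) ^ n

/-- The generating series of the complete homogeneous symmetric polynomials. -/
noncomputable def Hser (N : ℕ) : PowerSeries (MvPolynomial (Fin N) (ZMod 2)) :=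
  ∏ i : Fin N, Gser N i

/-- The generating series of the power sums. -/
noncomputable def Pser (N : ℕ) : PowerSeries (MvPolynomial (Fin N) (ZMod 2)) :=
  PowerSeries.mk fun n => if n = 0 then 0 else psum (Fin N) (ZMod 2) n

lemma prod_pow_toMultiset {σ M : Type*} [DecidableEq σ] [CommMonoid M] (g : σ → M)
    (l : σ →₀ ℕ) : ((Finsupp.toMultiset l).map g).prod = l.prod fun i n => g i ^ n := by
  induction l using Finsupp.induction with
  | zero => simp
  | single_add a n f han hn ih =>
    rw [map_add, Multiset.map_add, Multiset.prod_add, ih, Finsupp.toMultiset_single,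
      Finsupp.prod_add_index (by simp) (fun a _ b c => pow_add (g a) b c)]
    simp [Finsupp.prod_single_index, Multiset.nsmul_singleton, Multiset.prod_replicate]

lemma sum_univ_finsupp {σ : Type*} [Fintype σ] [DecidableEq σ] (l : σ →₀ ℕ) :
    ∑ i, l i = Multiset.card (Finsupp.toMultiset l) := by
  rw [Finsupp.card_toMultiset]
  exact (Finsupp.sum_fintype l (fun _ => id) (fun _ => rfl)).symm

lemma coeff_Hser (N d : ℕ) :
    PowerSeries.coeff d (Hser N) = hsymm (Fin N) (ZMod 2) d := by
  rw [Hser, PowerSeries.coeff_prod, hsymm]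
  refine Finset.sum_bij'
    (fun l hl => (⟨Finsupp.toMultiset l,
      (sum_univ_finsupp l).symm.trans (Finset.mem_finsuppAntidiag.mp hl).1⟩ : Sym (Fin N) d))
    (fun s _ => Multiset.toFinsupp s.1) (fun l hl => Finset.mem_univ _) ?_ ?_ ?_ ?_
  · intro s hs
    rw [Finset.mem_finsuppAntidiag]
    refine ⟨?_, Finset.subset_univ _⟩
    have h := sum_univ_finsupp (Multiset.toFinsupp s.1)
    rw [Multiset.toFinsupp_toMultiset] at h
    rw [show (Finset.univ.sum ⇑(Multiset.toFinsupp s.1)) = ∑ i, (Multiset.toFinsupp s.1) i from rfl,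
      h]
    exact s.2
  · intro l hl
    simp [Multiset.toFinsupp_toMultiset]
  · intro s hs
    exact Subtype.ext (by simp [Finsupp.toMultiset_toFinsupp])
  · intro l hl
    simp only [Gser, PowerSeries.coeff_mk]
    rw [prod_pow_toMultiset]
    exact (Finsupp.prod_of_support_subset l (Finset.subset_univ _)
      (fun i n => MvPolynomial.X i ^ n) (fun i _ => pow_zero _)).symm

lemma Pser_eq (N : ℕ) :
    Pser N = ∑ i : Fin N,
      PowerSeries.C (MvPolynomial.X i) * (PowerSeries.X * Gser N i) := by
  apply PowerSeries.ext
  intro n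
  rw [Pser, PowerSeries.coeff_mk]
  simp only [map_sum]
  cases n with
  | zero => simp [PowerSeries.coeff_C_mul, PowerSeries.coeff_zero_X_mul]
  | succ n =>
    rw [if_neg (Nat.succ_ne_zero n)]
    simp only [PowerSeries.coeff_C_mul, PowerSeries.coeff_succ_X_mul, Gser,
      PowerSeries.coeff_mk, psum]
    refine Finset.sum_congr rfl fun i _ => ?_
    rw [pow_succ']

lemma coeff_sq_Gser (N : ℕ) (i : Fin N) (n : ℕ) :
    PowerSeries.coeff n (Gser N i * Gser N i) =
      (n + 1 : MvPolynomial (Fin N) (ZMod 2)) * MvPolynomial.X i ^ n := by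
  rw [PowerSeries.coeff_mul]
  have h : ∀ p ∈ Finset.HasAntidiagonal.antidiagonal n,
      PowerSeries.coeff p.1 (Gser N i) * PowerSeries.coeff p.2 (Gser N i) =
        (MvPolynomial.X i : MvPolynomial (Fin N) (ZMod 2)) ^ n := by
    intro p hp
    rw [Gser, PowerSeries.coeff_mk, PowerSeries.coeff_mk, ← pow_add,
      Finset.HasAntidiagonal.mem_antidiagonal.mp hp]
  rw [Finset.sum_congr rfl h, Finset.sum_const, Finset.Nat.card_antidiagonal, nsmul_eq_mul]
  push_cast
  ring

lemma X_mul_deriv_Gser (N : ℕ) (i : Fin N) :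
    PowerSeries.X * (Gser N i).derivativeFun =
      PowerSeries.C (MvPolynomial.X i) * (PowerSeries.X * (Gser N i * Gser N i)) := by
  apply PowerSeries.ext
  intro n
  cases n with
  | zero => simp [PowerSeries.coeff_zero_X_mul, PowerSeries.coeff_C_mul]
  | succ n =>
    rw [PowerSeries.coeff_succ_X_mul, (show PowerSeries.coeff n (Gser N i).derivativeFun = PowerSeries.coeff (n + 1) (Gser N i) *
        ((n : MvPolynomial (Fin N) (ZMod 2)) + 1) from PowerSeries.coeff_derivative _ _),
      PowerSeries.coeff_C_mul, PowerSeries.coeff_succ_X_mul, coeff_sq_Gser]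
    rw [Gser, PowerSeries.coeff_mk]
    ring

lemma deriv_prod {R : Type*} [CommRing R] {ι : Type*} [DecidableEq ι] (s : Finset ι)
    (f : ι → PowerSeries R) :
    (∏ i ∈ s, f i).derivativeFun =
      ∑ i ∈ s, (∏ j ∈ s.erase i, f j) * (f i).derivativeFun := by
  induction s using Finset.induction_on with
  | empty => simp [PowerSeries.derivativeFun_one]
  | @insert a s ha ih =>
    rw [Finset.prod_insert ha, PowerSeries.derivativeFun_mul, ih, Finset.sum_insert ha,
      Finset.erase_insert ha, smul_eq_mul, smul_eq_mul, Finset.mul_sum]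
    have hsum : ∀ i ∈ s, f a * ((∏ j ∈ s.erase i, f j) * (f i).derivativeFun) =
        (∏ j ∈ (insert a s).erase i, f j) * (f i).derivativeFun := by
      intro i hi
      rw [Finset.erase_insert_of_ne (fun h => ha (by rw [h]; exact hi)),
        Finset.prod_insert (fun h => ha (Finset.mem_of_mem_erase h))]
      ring
    rw [Finset.sum_congr rfl hsum]
    exact add_comm _ _

lemma key (N : ℕ) : PowerSeries.X * (Hser N).derivativeFun = Pser N * Hser N := by
  rw [Hser, deriv_prod, Finset.mul_sum, Pser_eq, Finset.sum_mul]
  refine Finset.sum_congr rfl fun i _ => ?_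
  have h1 : Gser N i * ∏ j ∈ Finset.univ.erase i, Gser N j = ∏ j : Fin N, Gser N j :=
    Finset.mul_prod_erase _ _ (Finset.mem_univ i)
  calc PowerSeries.X * ((∏ j ∈ Finset.univ.erase i, Gser N j) * (Gser N i).derivativeFun)
      = (∏ j ∈ Finset.univ.erase i, Gser N j) *
          (PowerSeries.X * (Gser N i).derivativeFun) := by ring
    _ = (∏ j ∈ Finset.univ.erase i, Gser N j) *
        (PowerSeries.C (MvPolynomial.X i) * (PowerSeries.X * (Gser N i * Gser N i))) := by
        rw [X_mul_deriv_Gser]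
    _ = PowerSeries.C (MvPolynomial.X i) * (PowerSeries.X * Gser N i) *
        (Gser N i * ∏ j ∈ Finset.univ.erase i, Gser N j) := by ring
    _ = _ := by rw [h1]

lemma sum_range_eq_Icc {M : Type*} [AddCommMonoid M] (d : ℕ) (f : ℕ → M) :
    ∑ i ∈ Finset.range d, f (i + 1) = ∑ j ∈ Finset.Icc 1 d, f j := by
  refine Finset.sum_nbij' (fun i => i + 1) (fun j => j - 1) ?_ ?_ ?_ ?_ ?_
  · intro a ha; simp only [Finset.mem_range] at ha; simp only [Finset.mem_Icc]; omega
  · intro a ha; simp only [Finset.mem_Icc] at ha; simp only [Finset.mem_range]; omega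
  · intro a ha; show a + 1 - 1 = a; omega
  · intro a ha; simp only [Finset.mem_Icc] at ha; show a - 1 + 1 = a; omega
  · intro a ha; rfl

/-- Newton's identity for complete homogeneous symmetric polynomials (char 2 version). -/
lemma newton_h (N d : ℕ) :
    (d : MvPolynomial (Fin N) (ZMod 2)) * hsymm (Fin N) (ZMod 2) d =
      ∑ j ∈ Finset.Icc 1 d, hsymm (Fin N) (ZMod 2) (d - j) * psum (Fin N) (ZMod 2) j := by
  have h := congrArg (PowerSeries.coeff d) (key N)
  have hR : PowerSeries.coeff d (Pser N * Hser N) =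
      ∑ j ∈ Finset.Icc 1 d, hsymm (Fin N) (ZMod 2) (d - j) * psum (Fin N) (ZMod 2) j := by
    rw [PowerSeries.coeff_mul,
      Finset.Nat.sum_antidiagonal_eq_sum_range_succ
        (fun a b => PowerSeries.coeff a (Pser N) * PowerSeries.coeff b (Hser N)),
      Finset.sum_range_succ']
    have e1 : ∀ i ∈ Finset.range d,
        PowerSeries.coeff (i + 1) (Pser N) * PowerSeries.coeff (d - (i + 1)) (Hser N) =
          hsymm (Fin N) (ZMod 2) (d - (i + 1)) * psum (Fin N) (ZMod 2) (i + 1) := by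
      intro i hi
      rw [Pser, PowerSeries.coeff_mk, if_neg (Nat.succ_ne_zero i), coeff_Hser, mul_comm]
    rw [Finset.sum_congr rfl e1, Pser, PowerSeries.coeff_mk, if_pos rfl, zero_mul, add_zero,
      sum_range_eq_Icc d (fun j => hsymm (Fin N) (ZMod 2) (d - j) * psum (Fin N) (ZMod 2) j)]
  rw [hR] at h
  rw [← h]
  cases d with
  | zero => simp [PowerSeries.coeff_zero_X_mul]
  | succ e =>
    rw [PowerSeries.coeff_succ_X_mul, (show PowerSeries.coeff e (Hser N).derivativeFun = PowerSeries.coeff (e + 1) (Hser N) *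
        ((e : MvPolynomial (Fin N) (ZMod 2)) + 1) from PowerSeries.coeff_derivative _ _), coeff_Hser]
    push_cast
    ring

/-! ### Arithmetic facts -/

lemma choose_odd : ∀ k m j : ℕ, 1 ≤ m → j < 2 ^ k → Nat.choose (m * 2 ^ k - 1) j % 2 = 1 := by
  intro k
  induction k with
  | zero =>
    intro m j hm hj
    interval_cases j
    simp
  | succ k ih =>
    intro m j hm hj
    have ht : 1 ≤ 2 ^ k := Nat.one_le_two_pow
    have hmt : 1 ≤ m * 2 ^ k := Nat.one_le_iff_ne_zero.mpr (by positivity)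
    have he : 2 ^ (k + 1) = 2 * 2 ^ k := by ring
    have hluc := Choose.choose_modEq_choose_mod_mul_choose_div_nat
      (n := m * 2 ^ (k + 1) - 1) (k := j) (p := 2)
    unfold Nat.ModEq at hluc
    have he2 : m * 2 ^ (k + 1) = 2 * (m * 2 ^ k) := by ring
    have hmod : (m * 2 ^ (k + 1) - 1) % 2 = 1 := by rw [he2]; omega
    have hdiv : (m * 2 ^ (k + 1) - 1) / 2 = m * 2 ^ k - 1 := by rw [he2]; omega
    rw [hmod, hdiv] at hluc
    have hjm : j % 2 = 0 ∨ j % 2 = 1 := by omega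
    have hch1 : Nat.choose 1 (j % 2) = 1 := by
      rcases hjm with h | h <;> rw [h] <;> rfl
    rw [hch1, one_mul] at hluc
    have hj2 : j / 2 < 2 ^ k := by rw [he] at hj; omega
    rw [hluc]
    exact ih m (j / 2) hm hj2

theorem stmt_0 (k m : ℕ) (hk : 1 ≤ k) (hm : 1 ≤ m) (hmodd : Odd m)
    (n : ℕ) (hn : n = m * 2 ^ k - 1) (d : ℕ) (hd : d < 2 ^ k) (N : ℕ) :
    Ipoly N n d = 0 := by
  have ht : 1 ≤ 2 ^ k := Nat.one_le_two_pow
  have hmt : 1 ≤ m * 2 ^ k := Nat.one_le_iff_ne_zero.mpr (by positivity)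
  have hn1 : n + 1 = m * 2 ^ k := by omega
  have h2 : (2 : ZMod 2) = 0 := by decide
  have hA : ((n : ZMod 2)) = 1 := by
    have hs : ((n : ZMod 2)) + 1 = ((m * 2 ^ k : ℕ) : ZMod 2) := by
      rw [← hn1]; push_cast; ring
    have h0 : ((m * 2 ^ k : ℕ) : ZMod 2) = 0 := by
      push_cast
      rw [h2, zero_pow (by omega : k ≠ 0), mul_zero]
    rw [h0] at hs
    linear_combination hs - h2
  have hc1 : (((n : ℤ) - (d : ℤ) + 1 : ℤ) : ZMod 2) = (d : ZMod 2) := by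
    push_cast
    linear_combination hA + (1 - (d : ZMod 2)) * h2
  have hcj : ∀ j ∈ Finset.Icc 1 d, (((n.choose j : ℤ)) : ZMod 2) = 1 := by
    intro j hj
    have hjd : j < 2 ^ k := lt_of_le_of_lt (Finset.mem_Icc.mp hj).2 hd
    have hodd := choose_odd k m j hm hjd
    rw [← hn] at hodd
    push_cast
    rw [← ZMod.natCast_mod, hodd]
    rfl
  rw [Ipoly, hc1, Finset.sum_congr rfl fun j hj => by rw [hcj j hj, map_one, one_mul],
    ← newton_h, map_natCast]
  exact CharTwo.add_self_eq_zero _
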